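/- arXiv:1808.03949 — 2 statements merged into one kernel-verified Lean document; each statement's English description precedes it below -/
import Mathlib

section
/- For constants a, b, c > 0 and g(λ) = (a + 1/(bλ)) e^{cλ} on (0, ∞), the point λ* = 2/(c(1 + sqrt(1 + 4ab/c))) is the unique global minimizer of g on (0, ∞): g(λ*) ≤ g(λ) for all λ > 0, with equality only at λ = λ*. -/
open Real

/-- For `a, b, c > 0`, `λ* = 2 / (c (1 + √(1 + 4ab/c)))` is the unique global
minimizer of `g(λ) = (a + 1/(bλ)) exp(cλ)` on `(0, ∞)`. -/
theorem latency_global_minimizer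
    (a b c : ℝ) (ha : 0 < a) (hb : 0 < b) (hc : 0 < c) :
    ∀ lam : ℝ, 0 < lam →
      ((a + 1 / (b * (2 / (c * (1 + Real.sqrt (1 + 4 * a * b / c)))))) *
          Real.exp (c * (2 / (c * (1 + Real.sqrt (1 + 4 * a * b / c)))))
        ≤ (a + 1 / (b * lam)) * Real.exp (c * lam)) ∧
      ((a + 1 / (b * (2 / (c * (1 + Real.sqrt (1 + 4 * a * b / c)))))) *
          Real.exp (c * (2 / (c * (1 + Real.sqrt (1 + 4 * a * b / c)))))
        = (a + 1 / (b * lam)) * Real.exp (c * lam) →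
          lam = 2 / (c * (1 + Real.sqrt (1 + 4 * a * b / c)))) := by
  set s : ℝ := Real.sqrt (1 + 4 * a * b / c) with hs
  have hs2 : s ^ 2 = 1 + 4 * a * b / c := Real.sq_sqrt (by positivity)
  have hsnn : 0 ≤ s := Real.sqrt_nonneg _
  have h4 : 0 < 4 * a * b / c := by positivity
  have hs1 : 1 ≤ s := by nlinarith
  have h1s : 0 < 1 + s := by linarith
  clear_value s
  set L : ℝ := 2 / (c * (1 + s)) with hL
  have hLpos : 0 < L := by rw [hL]; positivity
  have key : c * (1 + s) * L = 2 := by rw [hL]; field_simp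
  clear_value L
  set g : ℝ → ℝ := fun x => (a + 1 / (b * x)) * Real.exp (c * x) with hg
  set q : ℝ → ℝ := fun x => a * b * c * x ^ 2 + c * x - 1 with hq
  have hcts : c * (1 + s) ≠ 0 := by positivity
  have hs2c : c * s ^ 2 = c + 4 * a * b := by
    rw [hs2]; field_simp
  have hct2 : c * (1 + s) ^ 2 ≠ 0 := by positivity
  have hqL : q L = 0 := by
    have h' : c * (1 + s) ^ 2 * (a * b * c * L ^ 2 + c * L - 1) = 0 := by
      linear_combination (a * b * (c * (1 + s) * L + 2) + c * (1 + s)) * key - hs2c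
    have h'' := (mul_eq_zero.mp h').resolve_left hct2
    simpa [hq] using h''
  have hqfac : ∀ x : ℝ, q x = (x - L) * (a * b * c * (x + L) + c) := by
    intro x
    have := hqL
    simp only [hq] at this ⊢
    linear_combination this
  have hderiv : ∀ x : ℝ, 0 < x →
      HasDerivAt g (Real.exp (c * x) * q x / (b * x ^ 2)) x := by
    intro x hx
    have hbx : b * x ≠ 0 := by positivity
    have h1 : HasDerivAt (fun y : ℝ => b * y) b x := by
      simpa using (hasDerivAt_id x).const_mul b
    have h2 : HasDerivAt (fun y : ℝ => a + 1 / (b * y)) (-b / (b * x) ^ 2) x := by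
      have := (h1.inv hbx).const_add a
      simpa [one_div, neg_div] using this
    have h3 : HasDerivAt (fun y : ℝ => Real.exp (c * y)) (Real.exp (c * x) * c) x := by
      have hcx : HasDerivAt (fun y : ℝ => c * y) c x := by
        simpa using (hasDerivAt_id x).const_mul c
      simpa using hcx.exp
    have h4 := h2.mul h3
    convert h4 using 1
    · rfl
    · rfl
    · rfl
    simp only [hq]
    field_simp
    ring
  have hanti : StrictAntiOn g (Set.Ioc 0 L) := by
    apply strictAntiOn_of_deriv_neg (convex_Ioc 0 L)
    · intro x hx
      exact ((hderiv x hx.1).differentiableAt.continuousAt).continuousWithinAt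
    · intro x hx
      rw [interior_Ioc] at hx
      have hx0 : 0 < x := hx.1
      rw [(hderiv x hx0).deriv]
      have hpos : 0 < a * b * c * (x + L) + c := by
        have := mul_pos (mul_pos (mul_pos ha hb) hc) (add_pos hx0 hLpos)
        linarith
      have hqx : q x < 0 := by
        rw [hqfac]
        have hneg : x - L < 0 := by linarith [hx.2]
        exact mul_neg_of_neg_of_pos hneg hpos
      have he : 0 < Real.exp (c * x) := Real.exp_pos _
      have hd : 0 < b * x ^ 2 := by positivity
      exact div_neg_of_neg_of_pos (mul_neg_of_pos_of_neg he hqx) hd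
  have hmono : StrictMonoOn g (Set.Ici L) := by
    apply strictMonoOn_of_deriv_pos (convex_Ici L)
    · intro x hx
      have hx0 : 0 < x := lt_of_lt_of_le hLpos hx
      exact ((hderiv x hx0).differentiableAt.continuousAt).continuousWithinAt
    · intro x hx
      rw [interior_Ici] at hx
      have hx0 : 0 < x := lt_trans hLpos hx
      rw [(hderiv x hx0).deriv]
      have hpos : 0 < a * b * c * (x + L) + c := by
        have := mul_pos (mul_pos (mul_pos ha hb) hc) (add_pos hx0 hLpos)
        linarith
      have hqx : 0 < q x := by
        rw [hqfac]
        exact mul_pos (sub_pos.mpr hx) hpos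
      have he : 0 < Real.exp (c * x) := Real.exp_pos _
      have hd : 0 < b * x ^ 2 := by positivity
      positivity
  intro lam hlam
  rcases lt_trichotomy lam L with h | h | h
  · have hlt : g L < g lam :=
      hanti (Set.mem_Ioc.mpr ⟨hlam, le_of_lt h⟩) (Set.mem_Ioc.mpr ⟨hLpos, le_refl L⟩) h
    exact ⟨le_of_lt hlt, fun heq => absurd heq (ne_of_lt hlt)⟩
  · exact ⟨le_of_eq (by rw [h]), fun _ => h⟩
  · have hlt : g L < g lam :=
      hmono (Set.mem_Ici.mpr (le_refl L)) (Set.mem_Ici.mpr (le_of_lt h)) h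
    exact ⟨le_of_lt hlt, fun heq => absurd heq (ne_of_lt hlt)⟩
end

section
/- For N_M ≥ 1 independent exponential(λ) mining times T_1, ..., T_{N_M} and nonnegative propagation delays t_1, ..., t_{N_M}, the probability that no forking occurs, i.e., Pr(for all j ≠ ô: T_j − T_ô > t_j) where ô = argmin_j T_j, equals Σ_{i=1}^{N_M} ∫_0^∞ λe^{-λx} ∏_{j≠i} e^{-λ(x + t_j)} dx = (1/N_M) Σ_{i=1}^{N_M} e^{-λ Σ_{j≠i} t_j} when delays enter only through the sum; in particular if all t_j = t, the no-fork probability is e^{-λ(N_M−1)t}. -/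
open MeasureTheory ProbabilityTheory Real Finset

lemma expMeasure_eq (r : ℝ) :
    expMeasure r = volume.withDensity (exponentialPDF r) := by
  rfl

lemma exp_tail {lam : ℝ} (hlam : 0 < lam) {a : ℝ} (ha : 0 ≤ a) :
    expMeasure lam (Set.Ioi a) = ENNReal.ofReal (Real.exp (-(lam * a))) := by
  have hP : IsProbabilityMeasure (expMeasure lam) := isProbabilityMeasure_expMeasure hlam
  have hIic : expMeasure lam (Set.Iic a) = ENNReal.ofReal (1 - Real.exp (-(lam * a))) := by
    rw [expMeasure_eq, withDensity_apply _ measurableSet_Iic,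
      lintegral_exponentialPDF_eq_antiDeriv hlam, if_pos ha]
  have h1 : expMeasure lam (Set.Ioi a) = 1 - expMeasure lam (Set.Iic a) := by
    rw [← Set.compl_Iic, measure_compl measurableSet_Iic (measure_ne_top _ _), measure_univ]
  rw [h1, hIic]
  have he : Real.exp (-(lam * a)) ≤ 1 :=
    Real.exp_le_one_iff.2 (neg_nonpos.2 (by positivity))
  refine ENNReal.sub_eq_of_eq_add (by simp) ?_
  rw [← ENNReal.ofReal_add (Real.exp_pos _).le (by linarith), ← ENNReal.ofReal_one]
  ring_nf

lemma exp_integral {b : ℝ} (hb : 0 < b) :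
    ∫ x in Set.Ioi (0:ℝ), Real.exp (-(b * x)) = 1 / b := by
  have := MeasureTheory.integral_comp_mul_left_Ioi (fun x => Real.exp (-x)) 0 hb
  simp only [mul_zero] at this
  simp only [← neg_mul] at this ⊢
  rw [show (fun x => Real.exp (-b * x)) = fun x => Real.exp (-(b * x)) from by ext x; ring_nf] at this
  simp only [← neg_mul] at this
  rw [this, integral_exp_neg_Ioi_zero]
  simp [one_div]

lemma joint_law {Ω : Type*} [MeasurableSpace Ω] (μ : Measure Ω) [IsProbabilityMeasure μ]
    {NM : ℕ} {lam : ℝ} (hlam : 0 < lam)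
    (T : Fin NM → Ω → ℝ) (hmeas : ∀ j, Measurable (T j))
    (hindep : iIndepFun T μ)
    (hexp : ∀ j, Measure.map (T j) μ = expMeasure lam) :
    Measure.map (fun ω i => T i ω) μ = Measure.pi (fun _ => expMeasure lam) := by
  have hP : IsProbabilityMeasure (expMeasure lam) := isProbabilityMeasure_expMeasure hlam
  have hTm : Measurable (fun ω i => T i ω) := measurable_pi_lambda _ fun i => hmeas i
  refine (Measure.pi_eq fun s hs => ?_).symm
  rw [Measure.map_apply hTm (MeasurableSet.univ_pi hs)]
  have hpre : (fun ω i => T i ω) ⁻¹' Set.pi Set.univ s = ⋂ i ∈ Finset.univ, T i ⁻¹' s i := by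
    ext ω; simp [Set.mem_pi]
  rw [hpre, hindep.measure_inter_preimage_eq_mul Finset.univ (fun i _ => hs i)]
  refine Finset.prod_congr rfl fun i _ => ?_
  rw [← hexp i, Measure.map_apply (hmeas i) (hs i)]

lemma map_eval_pi {ι : Type*} [Fintype ι] (μ : Measure ℝ) [IsProbabilityMeasure μ]
    (i : ι) : Measure.map (fun f : ι → ℝ => f i) (Measure.pi fun _ : ι => μ) = μ := by
  classical
  ext s hs
  rw [Measure.map_apply (measurable_pi_apply i) hs,
    show (fun f : ι → ℝ => f i) ⁻¹' s = Function.eval i ⁻¹' s from rfl,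
    Set.eval_preimage, Measure.pi_pi]
  rw [Finset.prod_eq_single i (fun j _ hj => by simp [Function.update_of_ne hj])
    (by simp)]
  simp

lemma pi_slice {NM : ℕ} (hNM : 1 ≤ NM) {lam : ℝ} (hlam : 0 < lam)
    (t : Fin NM → ℝ) (ht : ∀ j, 0 ≤ t j) (i : Fin NM) :
    Measure.pi (fun _ : Fin NM => expMeasure lam)
        {x | ∀ j, j ≠ i → x i + t j < x j}
      = ENNReal.ofReal
          (Real.exp (-(lam * ∑ j ∈ Finset.univ.erase i, t j)) / NM) := by
  set ν := expMeasure lam with hν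
  have hP : IsProbabilityMeasure ν := isProbabilityMeasure_expMeasure hlam
  let p : Fin NM → Prop := fun j => j = i
  set E' : Set (({j // p j} → ℝ) × ({j // ¬ p j} → ℝ)) :=
    {q | ∀ j : {j // ¬ p j}, q.1 ⟨i, rfl⟩ + t j.1 < q.2 j} with hE'
  have hE'm : MeasurableSet E' := by
    have : E' = ⋂ j : {j // ¬ p j}, {q : ({j // p j} → ℝ) × ({j // ¬ p j} → ℝ) |
        q.1 ⟨i, rfl⟩ + t j.1 < q.2 j} := by
      ext q; simp [hE', Set.mem_iInter]
    rw [this]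
    exact MeasurableSet.iInter fun j => measurableSet_lt
      (((measurable_pi_apply _).comp measurable_fst).add_const _)
      ((measurable_pi_apply j).comp measurable_snd)
  have hpre : (MeasurableEquiv.piEquivPiSubtypeProd (fun _ : Fin NM => ℝ) p) ⁻¹' E'
      = {x : Fin NM → ℝ | ∀ j, j ≠ i → x i + t j < x j} := by
    ext x
    simp only [Set.mem_preimage, MeasurableEquiv.piEquivPiSubtypeProd,
      Equiv.piEquivPiSubtypeProd, MeasurableEquiv.coe_mk, Equiv.coe_fn_mk, hE',
      Set.mem_setOf_eq]
    constructor
    · intro h j hj; exact h ⟨j, hj⟩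
    · rintro h ⟨j, hj⟩; exact h j hj
  have MP := measurePreserving_piEquivPiSubtypeProd (fun _ : Fin NM => ν) p
  rw [← hpre, MP.measure_preimage hE'm.nullMeasurableSet]
  rw [Measure.prod_apply hE'm]
  have hsec : ∀ a : {j // p j} → ℝ, (Prod.mk a ⁻¹' E')
      = Set.pi Set.univ (fun j : {j // ¬ p j} => Set.Ioi (a ⟨i, rfl⟩ + t j.1)) := by
    intro a; ext b; simp [hE', Set.mem_pi]
  set G : ℝ → ENNReal := fun x => ∏ j : {j // ¬ p j}, ν (Set.Ioi (x + t j.1)) with hG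
  have hGanti : Antitone G := by
    intro x y hxy
    exact Finset.prod_le_prod' fun j _ =>
      measure_mono (Set.Ioi_subset_Ioi (by linarith))
  have hGm : Measurable G := hGanti.measurable
  conv_lhs => enter [2, a]; rw [hsec a, Measure.pi_pi]
  rw [← lintegral_map (g := fun a : {j // p j} → ℝ => a ⟨i, rfl⟩) hGm
      (measurable_pi_apply _), @map_eval_pi _ (Subtype.fintype p) ν hP ⟨i, rfl⟩]
  -- now: ∫⁻ x, G x ∂ν = ofReal (exp (-(lam * s0)) / NM)
  set s0 : ℝ := ∑ j ∈ Finset.univ.erase i, t j with hs0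
  have hs0nn : 0 ≤ s0 := Finset.sum_nonneg fun j _ => ht j
  set k : ℕ := Fintype.card {j // ¬ p j} with hk
  have hNM0 : (0:ℝ) < NM := by exact_mod_cast hNM
  have hcard : (k : ℝ) = (NM : ℝ) - 1 := by
    have h1 : k = NM - 1 := by
      rw [hk, Fintype.card_subtype_compl]
      simp
    rw [h1, Nat.cast_sub hNM, Nat.cast_one]
  have hsum : ∑ j : {j // ¬ p j}, t j.1 = s0 := by
    rw [hs0]
    exact (Finset.sum_subtype _ (fun j => by simp [p]) t).symm
  have hpdfm : Measurable (exponentialPDF lam) :=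
    (measurable_exponentialPDFReal lam).ennreal_ofReal
  rw [hν, expMeasure_eq, lintegral_withDensity_eq_lintegral_mul _ hpdfm hGm]
  simp only [Pi.mul_apply]
  rw [← lintegral_add_compl (fun x => exponentialPDF lam x * G x)
      (measurableSet_Ici (a := (0:ℝ))), Set.compl_Ici]
  have hIio : ∫⁻ x in Set.Iio (0:ℝ), exponentialPDF lam x * G x = 0 := by
    rw [setLIntegral_congr_fun measurableSet_Iio (fun x hx => by
      rw [exponentialPDF_of_neg hx, zero_mul]), lintegral_zero]
  have key : ∀ x ∈ Set.Ici (0:ℝ), exponentialPDF lam x * G x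
      = ENNReal.ofReal (lam * Real.exp (-(lam * ((NM:ℝ) * x + s0)))) := by
    intro x hx
    have hx0 : (0:ℝ) ≤ x := hx
    have hGx : ∀ j : {j // ¬ p j}, ν (Set.Ioi (x + t j.1))
        = ENNReal.ofReal (Real.exp (-(lam * (x + t j.1)))) := fun j =>
      exp_tail hlam (add_nonneg hx0 (ht _))
    rw [exponentialPDF_of_nonneg hx0, hG]
    simp only [hGx]
    rw [← ENNReal.ofReal_prod_of_nonneg (fun j _ => (Real.exp_pos _).le),
      ← ENNReal.ofReal_mul (by positivity)]
    congr 1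
    rw [← Real.exp_sum]
    have hsA : ∑ j : {j // ¬ p j}, (x + t j.1) = (k:ℝ) * x + s0 := by
      rw [Finset.sum_add_distrib, Finset.sum_const, hsum, Finset.card_univ, ← hk,
        nsmul_eq_mul]
    have hsum2 : ∑ j : {j // ¬ p j}, -(lam * (x + t j.1))
        = -(lam * ((k:ℝ) * x + s0)) := by
      rw [Finset.sum_neg_distrib, ← Finset.mul_sum, hsA]
    have harg : -(lam * x) + -(lam * ((k:ℝ) * x + s0)) = -(lam * ((NM:ℝ) * x + s0)) := by
      rw [hcard]; ring
    rw [hsum2, mul_assoc, ← Real.exp_add, harg]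
  rw [setLIntegral_congr_fun measurableSet_Ici key, hIio, add_zero,
    ← setLIntegral_congr (Ioi_ae_eq_Ici (a := (0:ℝ)))]
  have hb : (0:ℝ) < lam * NM := by positivity
  have hint : Integrable (fun x => lam * Real.exp (-(lam * ((NM:ℝ) * x + s0))))
      (volume.restrict (Set.Ioi (0:ℝ))) := by
    have h1 : IntegrableOn (fun x => Real.exp (-(lam * NM) * x)) (Set.Ioi (0:ℝ)) :=
      exp_neg_integrableOn_Ioi 0 hb
    refine (h1.const_mul (lam * Real.exp (-(lam * s0)))).congr
      (ae_of_all _ fun x => ?_)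
    simp only [mul_assoc, ← Real.exp_add]
    congr 2
    ring
  rw [← ofReal_integral_eq_lintegral_ofReal hint
    (ae_of_all _ fun x => by positivity)]
  congr 1
  have h2 : ∫ x in Set.Ioi (0:ℝ), lam * Real.exp (-(lam * ((NM:ℝ) * x + s0)))
      = (lam * Real.exp (-(lam * s0))) * ∫ x in Set.Ioi (0:ℝ), Real.exp (-((lam * NM) * x)) := by
    rw [← integral_const_mul]
    refine integral_congr_ae (ae_of_all _ fun x => ?_)
    simp only [mul_assoc, ← Real.exp_add]
    congr 2
    ring
  rw [h2, exp_integral hb]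
  field_simp

/-- For `N_M` i.i.d. exponential(λ) mining times and nonnegative propagation
delays `t j`, the no-forking probability (every non-winning miner finishes more
than its propagation delay after the winner) equals
`(1/N_M) ∑ i exp(-λ ∑_{j≠i} t j)`; in particular if all `t j = t` it equals
`exp(-λ (N_M - 1) t)`. -/
theorem no_fork_probability
    {Ω : Type*} [MeasurableSpace Ω] (μ : Measure Ω) [IsProbabilityMeasure μ]
    (NM : ℕ) (hNM : 1 ≤ NM) (lam : ℝ) (hlam : 0 < lam)
    (T : Fin NM → Ω → ℝ) (hmeas : ∀ j, Measurable (T j))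
    (hindep : iIndepFun T μ)
    (hexp : ∀ j, Measure.map (T j) μ = expMeasure lam)
    (t : Fin NM → ℝ) (ht : ∀ j, 0 ≤ t j) :
    μ {ω | ∃ i, ∀ j, j ≠ i → T i ω + t j < T j ω}
      = ENNReal.ofReal ((1 / (NM : ℝ)) *
          ∑ i : Fin NM, Real.exp (-(lam * ∑ j ∈ Finset.univ.erase i, t j))) ∧
    (∀ c : ℝ, 0 ≤ c → (∀ j, t j = c) →
      μ {ω | ∃ i, ∀ j, j ≠ i → T i ω + t j < T j ω}
        = ENNReal.ofReal (Real.exp (-(lam * ((NM : ℝ) - 1) * c)))) := by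
  have hNM0 : (0:ℝ) < NM := by exact_mod_cast hNM
  have hTm : Measurable (fun ω i => T i ω) := measurable_pi_lambda _ fun i => hmeas i
  set S : Fin NM → Set (Fin NM → ℝ) := fun i => {x | ∀ j, j ≠ i → x i + t j < x j}
    with hS
  have hSm : ∀ i, MeasurableSet (S i) := by
    intro i
    have : S i = ⋂ j, ⋂ (_ : j ≠ i), {x : Fin NM → ℝ | x i + t j < x j} := by
      ext x; simp [hS]
    rw [this]
    exact MeasurableSet.iInter fun j => MeasurableSet.iInter fun _ =>
      measurableSet_lt ((measurable_pi_apply i).add_const _) (measurable_pi_apply j)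
  have hdisj : Pairwise (Function.onFun Disjoint S) := by
    intro a b hab
    refine Set.disjoint_left.2 fun x hxa hxb => ?_
    have h1 := hxa b (Ne.symm hab)
    have h2 := hxb a hab
    have := ht a; have := ht b
    linarith
  have hE : {ω | ∃ i, ∀ j, j ≠ i → T i ω + t j < T j ω}
      = (fun ω i => T i ω) ⁻¹' (⋃ i, S i) := by
    ext ω; simp [hS]
  have hfirst : μ {ω | ∃ i, ∀ j, j ≠ i → T i ω + t j < T j ω}
      = ENNReal.ofReal ((1 / (NM : ℝ)) *
          ∑ i : Fin NM, Real.exp (-(lam * ∑ j ∈ Finset.univ.erase i, t j))) := by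
    rw [hE, ← Measure.map_apply hTm (MeasurableSet.iUnion hSm),
      joint_law μ hlam T hmeas hindep hexp, measure_iUnion hdisj hSm, tsum_fintype]
    have hval : ∀ i : Fin NM, Measure.pi (fun _ : Fin NM => expMeasure lam) (S i)
        = ENNReal.ofReal
            (Real.exp (-(lam * ∑ j ∈ Finset.univ.erase i, t j)) / NM) :=
      fun i => pi_slice hNM hlam t ht i
    simp only [hval]
    rw [← ENNReal.ofReal_sum_of_nonneg (fun i _ => by positivity)]
    congr 1
    rw [Finset.mul_sum]
    exact Finset.sum_congr rfl fun i _ => by ring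
  refine ⟨hfirst, fun c hc hcall => ?_⟩
  rw [hfirst]
  congr 1
  have hcardE : ∀ i : Fin NM, (Finset.univ.erase i).card = NM - 1 := fun i => by
    rw [Finset.card_erase_of_mem (Finset.mem_univ i), Finset.card_univ, Fintype.card_fin]
  have hsum : ∀ i : Fin NM, ∑ j ∈ Finset.univ.erase i, t j = ((NM : ℝ) - 1) * c := by
    intro i
    simp only [hcall]
    rw [Finset.sum_const, hcardE i, nsmul_eq_mul, Nat.cast_sub hNM, Nat.cast_one]
  simp only [hsum]
  rw [Finset.sum_const, Finset.card_univ, Fintype.card_fin, nsmul_eq_mul]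
  have : lam * (((NM:ℝ) - 1) * c) = lam * ((NM:ℝ) - 1) * c := by ring
  rw [this]
  field_simp
end
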